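/- (Lemma 2.) Let A ∈ ℝ^{m×n}, let A_r be its best rank-r approximation, set ε = ‖A − A_r‖_F and assume ε > 0. Let Ω consist of s index pairs drawn independently and uniformly at random from [m]×[n], and suppose s ≥ (8 m n ‖A − A_r‖_∞² / (3 ε²)) · β log(n) for some β > 1. Then with probability at least 1 − n^{−β}, one has ⟨R_Ω(A − A_r), A − A_r⟩ ≤ 2 s ε² / (m n), i.e. √(⟨R_Ω(A − A_r), A − A_r⟩) ≤ ε·√(2s/(mn)). -/

import Mathlib

open scoped BigOperators
open Matrix
open MeasureTheory

namespace MC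

variable {m n r s : ℕ}

/-- Trace inner product `⟨X,Y⟩ = trace(Xᵀ Y)`. -/
def ip (A B : Matrix (Fin m) (Fin n) ℝ) : ℝ := ∑ i, ∑ j, A i j * B i j

/-- Frobenius norm. -/
noncomputable def fro (A : Matrix (Fin m) (Fin n) ℝ) : ℝ := Real.sqrt (ip A A)

/-- Largest absolute value of an entry. -/
noncomputable def infNorm (A : Matrix (Fin m) (Fin n) ℝ) : ℝ := ⨆ i, ⨆ j, |A i j|

/-- Nuclear norm: sum of singular values. -/
noncomputable def nuclearNorm (A : Matrix (Fin m) (Fin n) ℝ) : ℝ :=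
  ∑ j, Real.sqrt ((show (Aᵀ * A).IsHermitian by
    simpa using Matrix.isHermitian_conjTranspose_mul_self A).eigenvalues j)

/-- Spectral norm: largest singular value. -/
noncomputable def specNorm (A : Matrix (Fin m) (Fin n) ℝ) : ℝ :=
  ⨆ j, Real.sqrt ((show (Aᵀ * A).IsHermitian by
    simpa using Matrix.isHermitian_conjTranspose_mul_self A).eigenvalues j)

/-- Sampling operator for a multiset of index pairs. -/
def RΩ (Ω : Multiset (Fin m × Fin n)) (Z : Matrix (Fin m) (Fin n) ℝ) :
    Matrix (Fin m) (Fin n) ℝ :=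
  Matrix.of fun i j => (Ω.count (i, j)) * Z i j

def PT (U : Matrix (Fin m) (Fin r) ℝ) (V : Matrix (Fin n) (Fin r) ℝ)
    (Z : Matrix (Fin m) (Fin n) ℝ) : Matrix (Fin m) (Fin n) ℝ :=
  U * Uᵀ * Z + Z * (V * Vᵀ) - U * Uᵀ * Z * (V * Vᵀ)

def PTperp (U : Matrix (Fin m) (Fin r) ℝ) (V : Matrix (Fin n) (Fin r) ℝ)
    (Z : Matrix (Fin m) (Fin n) ℝ) : Matrix (Fin m) (Fin n) ℝ :=
  (1 - U * Uᵀ) * Z * (1 - V * Vᵀ)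

/-- Objective of nuclear-norm regularized least squares. -/
noncomputable def obj (Ω : Multiset (Fin m × Fin n)) (A : Matrix (Fin m) (Fin n) ℝ)
    (lam : ℝ) (B : Matrix (Fin m) (Fin n) ℝ) : ℝ :=
  (1 / 2) * (Ω.map fun p => (B p.1 p.2 - A p.1 p.2) ^ 2).sum + lam * nuclearNorm B

/-- Uniform probability measure on index pairs. -/
noncomputable def unifPair (m n : ℕ) : Measure (Fin m × Fin n) :=
  (Fintype.card (Fin m × Fin n) : ENNReal)⁻¹ • Measure.count

/-- Law of `s` i.i.d. uniform index pairs. -/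
noncomputable def sampleMeasure (m n s : ℕ) : Measure (Fin s → Fin m × Fin n) :=
  Measure.pi fun _ => unifPair m n

/-- The multiset of sampled indices. -/
def toMS (ω : Fin s → Fin m × Fin n) : Multiset (Fin m × Fin n) :=
  Multiset.map ω Finset.univ.val



-- auxiliary lemmas for stmt3


-- convexity bound on exp
lemma exp_le_linear {t c x : ℝ} (hc : 0 < c) (h0 : 0 ≤ x) (hxc : x ≤ c) :
    Real.exp (t * x) ≤ 1 + (x / c) * (Real.exp (t * c) - 1) := by
  have hb0 : 0 ≤ x / c := div_nonneg h0 hc.le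
  have hb1 : x / c ≤ 1 := (div_le_one hc).2 hxc
  have h := convexOn_exp.2 (Set.mem_univ (0 : ℝ)) (Set.mem_univ (t * c))
    (by linarith : (0:ℝ) ≤ 1 - x / c) hb0 (by ring)
  simp only [smul_eq_mul, mul_zero, zero_add, Real.exp_zero] at h
  have hx : x / c * (t * c) = t * x := by field_simp
  rw [hx] at h
  linarith

lemma chernoff_real {P : Type*} [Fintype P] (s : ℕ) (f : P → ℝ) (c q a t : ℝ)
    (hq : 0 ≤ q) (hqc : q * (Fintype.card P : ℝ) = 1) (hc : 0 < c) (ht : 0 < t)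
    (hf0 : ∀ p, 0 ≤ f p) (hfc : ∀ p, f p ≤ c)
    (F : Finset (Fin s → P)) (hF : ∀ ω ∈ F, a < ∑ k, f (ω k)) :
    (F.card : ℝ) * q ^ s
      ≤ Real.exp ((Real.exp (t*c) - 1) * (q * ∑ p, f p) / c * s - t * a) := by
  set X : ℝ := (Real.exp (t*c) - 1) * (q * ∑ p, f p) / c with hX
  have key1 : (F.card : ℝ) * q ^ s ≤ ∑ ω : Fin s → P, Real.exp (t * (∑ k, f (ω k) - a)) * q ^ s := by
    have h1 : (F.card : ℝ) * q ^ s = ∑ _ω ∈ F, q ^ s := by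
      rw [Finset.sum_const, nsmul_eq_mul]
    rw [h1]
    refine le_trans (Finset.sum_le_sum ?_) (Finset.sum_le_sum_of_subset_of_nonneg
      (Finset.subset_univ F) (fun ω _ _ => by positivity))
    intro ω hω
    have h2 : (0:ℝ) ≤ t * (∑ k, f (ω k) - a) := by
      have := hF ω hω
      have h3 : 0 ≤ ∑ k, f (ω k) - a := by linarith
      positivity
    nlinarith [Real.one_le_exp h2, pow_nonneg hq s]
  have key2 : ∀ ω : Fin s → P, Real.exp (t * (∑ k, f (ω k) - a)) * q ^ s
      = Real.exp (-(t*a)) * ∏ k, (q * Real.exp (t * f (ω k))) := by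
    intro ω
    rw [Finset.prod_mul_distrib, Finset.prod_const, Finset.card_univ, Fintype.card_fin,
      ← Real.exp_sum]
    have h4 : ∑ k : Fin s, t * f (ω k) = t * ∑ k, f (ω k) := by rw [← Finset.mul_sum]
    rw [h4, mul_sub, Real.exp_sub, Real.exp_neg]
    field_simp
  have key3 : ∑ ω : Fin s → P, ∏ k, (q * Real.exp (t * f (ω k)))
      = (∑ p, q * Real.exp (t * f p)) ^ s := by
    symm
    calc (∑ p, q * Real.exp (t * f p)) ^ s
        = ∏ _k : Fin s, (∑ p, q * Real.exp (t * f p)) := by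
          rw [Finset.prod_const, Finset.card_univ, Fintype.card_fin]
      _ = ∑ ω ∈ Fintype.piFinset (fun _ : Fin s => (Finset.univ : Finset P)),
            ∏ k, (q * Real.exp (t * f (ω k))) :=
          Finset.prod_univ_sum (fun _ : Fin s => (Finset.univ : Finset P))
            (fun _ p => q * Real.exp (t * f p))
      _ = ∑ ω : Fin s → P, ∏ k, (q * Real.exp (t * f (ω k))) := by
          rw [Fintype.piFinset_univ]
  have key4 : ∑ p, q * Real.exp (t * f p) ≤ Real.exp X := by
    have h5 : ∑ p, q * Real.exp (t * f p) ≤ ∑ p, q * (1 + (f p / c) * (Real.exp (t*c) - 1)) :=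
      Finset.sum_le_sum fun p _ =>
        mul_le_mul_of_nonneg_left (exp_le_linear hc (hf0 p) (hfc p)) hq
    have h6 : ∑ p, q * (1 + (f p / c) * (Real.exp (t*c) - 1)) = 1 + X := by
      rw [hX]
      simp only [mul_add, mul_one, Finset.sum_add_distrib, Finset.sum_const,
        nsmul_eq_mul]
      rw [Finset.card_univ, mul_comm ((Fintype.card P : ℝ)) q, hqc]
      congr 1
      simp only [div_eq_mul_inv, Finset.mul_sum, Finset.sum_mul]
      exact Finset.sum_congr rfl fun p _ => by ring
    calc ∑ p, q * Real.exp (t * f p) ≤ 1 + X := h5.trans_eq h6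
    _ ≤ Real.exp X := by linarith [Real.add_one_le_exp X]
  have hnn : (0:ℝ) ≤ ∑ p, q * Real.exp (t * f p) := by positivity
  calc (F.card : ℝ) * q ^ s ≤ ∑ ω : Fin s → P, Real.exp (t * (∑ k, f (ω k) - a)) * q ^ s := key1
    _ = Real.exp (-(t*a)) * ∑ ω : Fin s → P, ∏ k, (q * Real.exp (t * f (ω k))) := by
        rw [Finset.mul_sum]; exact Finset.sum_congr rfl fun ω _ => key2 ω
    _ = Real.exp (-(t*a)) * (∑ p, q * Real.exp (t * f p)) ^ s := by rw [key3]
    _ ≤ Real.exp (-(t*a)) * (Real.exp X) ^ s := by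
        have := pow_le_pow_left₀ hnn key4 s
        exact mul_le_mul_of_nonneg_left this (Real.exp_nonneg _)
    _ = Real.exp (X * s - t * a) := by
        rw [← Real.exp_nat_mul, ← Real.exp_add]
        congr 1; ring



lemma unifPair_singleton {m n : ℕ} (p : Fin m × Fin n) :
    unifPair m n {p} = ((m * n : ℕ) : ENNReal)⁻¹ := by
  unfold unifPair
  rw [Measure.smul_apply, Measure.count_singleton, smul_eq_mul, mul_one,
    Fintype.card_prod, Fintype.card_fin, Fintype.card_fin]

lemma unifPair_prob {m n : ℕ} (hm : 0 < m) (hn : 0 < n) :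
    IsProbabilityMeasure (unifPair m n) := by
  constructor
  unfold unifPair
  rw [Measure.smul_apply, Measure.count_univ, ENat.card_eq_coe_fintype_card,
    ENat.toENNReal_coe, smul_eq_mul,
    Fintype.card_prod, Fintype.card_fin, Fintype.card_fin]
  rw [ENNReal.inv_mul_cancel]
  · exact Nat.cast_ne_zero.2 (Nat.mul_pos hm hn).ne'
  · exact ENNReal.natCast_ne_top _

lemma sample_singleton {m n s : ℕ} (hm : 0 < m) (hn : 0 < n) (ω : Fin s → Fin m × Fin n) :
    sampleMeasure m n s {ω} = (((m * n : ℕ) : ENNReal)⁻¹) ^ s := by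
  haveI := unifPair_prob (m := m) (n := n) hm hn
  unfold sampleMeasure
  rw [← Set.univ_pi_singleton, Measure.pi_pi]
  simp [unifPair_singleton]

lemma sample_apply {m n s : ℕ} (hm : 0 < m) (hn : 0 < n) (T : Set (Fin s → Fin m × Fin n)) :
    sampleMeasure m n s T
      = (T.toFinite.toFinset.card : ENNReal) * (((m * n : ℕ) : ENNReal)⁻¹) ^ s := by
  have hT : T = ⋃ x ∈ T.toFinite.toFinset, ({x} : Set _) := by
    ext y; simp [Set.Finite.mem_toFinset]
  nth_rewrite 1 [hT]
  rw [measure_biUnion_finset (fun x _ y _ hxy => Set.disjoint_singleton.2 hxy)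
    (fun b _ => measurableSet_singleton b)]
  simp [sample_singleton hm hn, Finset.sum_const]

lemma ip_RΩ {m n s : ℕ} (Z : Matrix (Fin m) (Fin n) ℝ) (ω : Fin s → Fin m × Fin n) :
    ip (RΩ (toMS ω) Z) Z = ∑ k, Z (ω k).1 (ω k).2 ^ 2 := by
  unfold ip RΩ toMS
  simp only [Matrix.of_apply]
  rw [← Fintype.sum_prod_type']
  have hcount : ∀ p : Fin m × Fin n, ((Multiset.map ω Finset.univ.val).count p : ℝ)
      = ∑ k : Fin s, if p = ω k then 1 else 0 := by
    intro p
    rw [Multiset.count_map]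
    have h1 : Multiset.card (Multiset.filter (fun a => p = ω a) Finset.univ.val)
        = (Finset.filter (fun k => p = ω k) Finset.univ).card := rfl
    rw [h1, Finset.card_filter]
    push_cast
    rfl
  calc ∑ p : Fin m × Fin n, ((Multiset.map ω Finset.univ.val).count (p.1, p.2) : ℝ)
          * Z p.1 p.2 * Z p.1 p.2
      = ∑ p : Fin m × Fin n, ∑ k : Fin s, if p = ω k then Z p.1 p.2 ^ 2 else 0 := by
        refine Finset.sum_congr rfl fun p _ => ?_
        rw [show ((p.1, p.2) : Fin m × Fin n) = p from rfl, hcount p, Finset.sum_mul,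
          Finset.sum_mul]
        refine Finset.sum_congr rfl fun k _ => ?_
        by_cases h : p = ω k <;> simp [h, sq]
    _ = ∑ k : Fin s, Z (ω k).1 (ω k).2 ^ 2 := by
        rw [Finset.sum_comm]
        refine Finset.sum_congr rfl fun k _ => ?_
        simp

/-- Lemma 2: if `Ω` consists of `s` indices drawn i.i.d. uniformly
from `[m]×[n]` and `s ≥ (8mn‖A−A_r‖_∞²/(3ε²))·β·log n` for some `β > 1`, then with
probability at least `1 − n^{−β}` one has
`⟨R_Ω(A − A_r), A − A_r⟩ ≤ 2sε²/(mn)` where `ε = ‖A − A_r‖_F`. -/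
theorem stmt3 (m n r s : ℕ) (hm : 0 < m) (hmn : m ≤ n) (hrm : r ≤ m)
    -- singular value decomposition of `A`
    (σ : Fin m → ℝ) (u : Fin m → Fin m → ℝ) (v : Fin m → Fin n → ℝ)
    (hσdec : ∀ i j : Fin m, i ≤ j → σ j ≤ σ i)
    (hσ0 : ∀ i, 0 ≤ σ i)
    (hu : ∀ i i' : Fin m, ∑ k, u i k * u i' k = if i = i' then 1 else 0)
    (hv : ∀ i i' : Fin m, ∑ k, v i k * v i' k = if i = i' then 1 else 0)
    (A : Matrix (Fin m) (Fin n) ℝ)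
    (hA : A = ∑ i, σ i • Matrix.vecMulVec (u i) (v i))
    -- the best rank-`r` approximation of `A`
    (Ar : Matrix (Fin m) (Fin n) ℝ)
    (hAr : Ar = ∑ i ∈ Finset.univ.filter (fun i : Fin m => (i : ℕ) < r),
        σ i • Matrix.vecMulVec (u i) (v i))
    (β : ℝ) (hβ : 1 < β)
    (hε : 0 < fro (A - Ar))
    (hs : (8 * m * n * (infNorm (A - Ar)) ^ 2 / (3 * (fro (A - Ar)) ^ 2)) * β *
        Real.log n ≤ (s : ℝ)) :
    ENNReal.ofReal (1 - (n : ℝ) ^ (-β)) ≤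
      sampleMeasure m n s
        {ω | ip (RΩ (toMS ω) (A - Ar)) (A - Ar)
              ≤ 2 * s * (fro (A - Ar)) ^ 2 / (m * n)} := by
  classical
  have hn : 0 < n := lt_of_lt_of_le hm hmn
  set Z : Matrix (Fin m) (Fin n) ℝ := A - Ar with hZ
  have hipZ : ip Z Z = ∑ p : Fin m × Fin n, Z p.1 p.2 ^ 2 := by
    unfold ip; rw [← Fintype.sum_prod_type']
    exact Finset.sum_congr rfl fun p _ => by rw [sq]
  have hip0 : 0 ≤ ip Z Z := by rw [hipZ]; positivity
  have hfro2 : fro Z ^ 2 = ip Z Z := by unfold fro; exact Real.sq_sqrt hip0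
  have hippos : 0 < ip Z Z := by
    have h := hε; unfold fro at h; exact Real.sqrt_pos.1 h
  have hε2pos : 0 < fro Z ^ 2 := pow_pos hε 2
  set c : ℝ := infNorm Z ^ 2 with hcdef
  have habs : ∀ i j, |Z i j| ≤ infNorm Z := by
    intro i j
    have h1 : |Z i j| ≤ ⨆ j', |Z i j'| :=
      le_ciSup (f := fun j' => |Z i j'|) (Set.Finite.bddAbove (Set.finite_range _)) j
    have h2 : (⨆ j', |Z i j'|) ≤ infNorm Z :=
      le_ciSup (f := fun i' => ⨆ j', |Z i' j'|) (Set.Finite.bddAbove (Set.finite_range _)) i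
    exact h1.trans h2
  have hfc : ∀ p : Fin m × Fin n, Z p.1 p.2 ^ 2 ≤ c := fun p => by
    have h := habs p.1 p.2
    nlinarith [abs_nonneg (Z p.1 p.2), sq_abs (Z p.1 p.2)]
  have hcpos : 0 < c := by
    by_contra hcc
    push_neg at hcc
    have h : ip Z Z ≤ 0 := by
      rw [hipZ]; exact Finset.sum_nonpos fun p _ => (hfc p).trans hcc
    linarith
  set q : ℝ := ((m * n : ℕ) : ℝ)⁻¹ with hqdef
  have hmn0 : (0:ℝ) < ((m * n : ℕ) : ℝ) := by exact_mod_cast Nat.mul_pos hm hn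
  have hq0 : 0 ≤ q := inv_nonneg.2 hmn0.le
  set t : ℝ := Real.log 2 / c with htdef
  have hlog2 : 0 < Real.log 2 := Real.log_pos (by norm_num)
  have ht : 0 < t := div_pos hlog2 hcpos
  set a : ℝ := 2 * (s:ℝ) * fro Z ^ 2 / ((m:ℝ) * (n:ℝ)) with hadef
  set E : Set (Fin s → Fin m × Fin n) := {ω | ip (RΩ (toMS ω) Z) Z ≤ a} with hEdef
  set F := (Set.toFinite Eᶜ).toFinset with hFdef
  have hF : ∀ ω ∈ F, a < ∑ k, Z (ω k).1 (ω k).2 ^ 2 := by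
    intro ω hω
    have h : ω ∈ Eᶜ := (Set.Finite.mem_toFinset _).1 hω
    have h2 : ¬ ip (RΩ (toMS ω) Z) Z ≤ a := h
    rw [ip_RΩ] at h2
    exact lt_of_not_ge h2
  have hqc : q * (Fintype.card (Fin m × Fin n) : ℝ) = 1 := by
    rw [hqdef]
    rw [show Fintype.card (Fin m × Fin n) = m * n by simp]
    exact inv_mul_cancel₀ hmn0.ne'
  have hcher := chernoff_real s (fun p : Fin m × Fin n => Z p.1 p.2 ^ 2) c q a t
    hq0 hqc hcpos ht (fun p => sq_nonneg _) hfc F hF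
  have hexp2 : Real.exp (t * c) = 2 := by
    rw [htdef, div_mul_cancel₀ _ hcpos.ne', Real.exp_log]; norm_num
  have hsum : ∑ p : Fin m × Fin n, Z p.1 p.2 ^ 2 = fro Z ^ 2 := (hfro2.trans hipZ).symm
  set G : ℝ := (s:ℝ) * fro Z ^ 2 / ((m:ℝ) * (n:ℝ) * c) with hGdef
  have hGnn : 0 ≤ G := by positivity
  have hE1 : (Real.exp (t*c) - 1) * (q * ∑ p : Fin m × Fin n, Z p.1 p.2 ^ 2) / c * s - t * a
      = G * (1 - 2 * Real.log 2) := by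
    rw [hexp2, hsum, hqdef, htdef, hadef, hGdef]
    push_cast
    field_simp
    ring
  have hlogn : 0 ≤ Real.log n := Real.log_nonneg (by exact_mod_cast hn)
  have hkey : β * Real.log n ≤ 3/8 * G := by
    have hmnc : (0:ℝ) < (m:ℝ) * (n:ℝ) * c := by
      have : (0:ℝ) < (m:ℝ) := by exact_mod_cast hm
      have : (0:ℝ) < (n:ℝ) := by exact_mod_cast hn
      positivity
    calc β * Real.log n
        = (8 * (m:ℝ) * (n:ℝ) * c / (3 * fro Z ^ 2) * β * Real.log n)
            * (3 * fro Z ^ 2 / (8 * ((m:ℝ) * (n:ℝ) * c))) := by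
          field_simp
      _ ≤ (s:ℝ) * (3 * fro Z ^ 2 / (8 * ((m:ℝ) * (n:ℝ) * c))) := by
          refine mul_le_mul_of_nonneg_right ?_ (by positivity)
          exact_mod_cast hs
      _ = 3/8 * G := by rw [hGdef]; ring
  have hfinal : G * (1 - 2 * Real.log 2) ≤ -(β * Real.log n) := by
    have h38 : (3:ℝ)/8 ≤ 2 * Real.log 2 - 1 := by
      have := Real.log_two_gt_d9; linarith
    have h39 : 3/8 * G ≤ (2 * Real.log 2 - 1) * G :=
      mul_le_mul_of_nonneg_right h38 hGnn
    have h40 : G * (1 - 2 * Real.log 2) = -((2 * Real.log 2 - 1) * G) := by ring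
    rw [h40]
    linarith
  have hrpow : Real.exp (-(β * Real.log n)) = (n:ℝ) ^ (-β) := by
    rw [Real.rpow_def_of_pos (by exact_mod_cast hn : (0:ℝ) < (n:ℝ))]
    congr 1; ring
  have hmain : (F.card : ℝ) * q ^ s ≤ (n:ℝ) ^ (-β) := by
    calc (F.card : ℝ) * q ^ s
        ≤ Real.exp ((Real.exp (t*c) - 1) * (q * ∑ p : Fin m × Fin n, Z p.1 p.2 ^ 2) / c * s
            - t * a) := hcher
      _ = Real.exp (G * (1 - 2 * Real.log 2)) := by rw [hE1]
      _ ≤ Real.exp (-(β * Real.log n)) := Real.exp_le_exp.2 hfinal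
      _ = (n:ℝ) ^ (-β) := hrpow
  -- measure-theoretic conclusion
  haveI hprob : IsProbabilityMeasure (unifPair m n) := unifPair_prob hm hn
  haveI hprob2 : IsProbabilityMeasure (sampleMeasure m n s) := by
    unfold sampleMeasure; infer_instance
  have hEm : MeasurableSet E := (Set.to_countable E).measurableSet
  have hcompl : sampleMeasure m n s Eᶜ ≤ ENNReal.ofReal ((n:ℝ) ^ (-β)) := by
    rw [sample_apply hm hn]
    have h1 : (((m * n : ℕ) : ENNReal))⁻¹ = ENNReal.ofReal q := by
      rw [hqdef, ENNReal.ofReal_inv_of_pos hmn0, ENNReal.ofReal_natCast]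
    rw [h1, ← ENNReal.ofReal_pow hq0,
      show (((Set.toFinite Eᶜ).toFinset.card : ℕ) : ENNReal)
          = ENNReal.ofReal ((F.card : ℝ)) by rw [hFdef, ENNReal.ofReal_natCast],
      ← ENNReal.ofReal_mul (Nat.cast_nonneg _)]
    exact ENNReal.ofReal_le_ofReal hmain
  have hcomplEq : sampleMeasure m n s Eᶜ = 1 - sampleMeasure m n s E :=
    prob_compl_eq_one_sub hEm
  have hEeq : sampleMeasure m n s E = 1 - sampleMeasure m n s Eᶜ := by
    rw [hcomplEq, ENNReal.sub_sub_cancel ENNReal.one_ne_top prob_le_one]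
  calc ENNReal.ofReal (1 - (n:ℝ) ^ (-β))
      = 1 - ENNReal.ofReal ((n:ℝ) ^ (-β)) := by
        rw [ENNReal.ofReal_sub _ (Real.rpow_nonneg (Nat.cast_nonneg n) _), ENNReal.ofReal_one]
    _ ≤ 1 - sampleMeasure m n s Eᶜ := tsub_le_tsub_left hcompl 1
    _ = sampleMeasure m n s E := hEeq.symm


end MC
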